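/- Let n be a Carmichael number whose index i(n) = (n−1)/λ(n) is even. Then for every integer a coprime to n one has a^((n-1)/2) ≡ 1 (mod n); consequently the Euler liars for n are exactly the a ∈ (Z/nZ)* with Jacobi symbol (a/n) = 1, there are exactly φ(n)/2 of them, and every Euler liar for n has Jacobi symbol 1. -/

import Mathlib

open scoped Classical

/-- The Carmichael lambda function: the least `ℓ > 0` with `a ^ ℓ ≡ 1 (mod n)`
for all `a` coprime to `n`. -/
noncomputable def carmichaelLambda (n : ℕ) : ℕ :=
  sInf {ℓ : ℕ | 0 < ℓ ∧ ∀ a : ℕ, Nat.Coprime a n → a ^ ℓ ≡ 1 [MOD n]}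

/-- A Carmichael number: a composite `n` with `a ^ (n-1) ≡ 1 (mod n)`
for all `a` coprime to `n`. -/
def IsCarmichael (n : ℕ) : Prop :=
  1 < n ∧ ¬ n.Prime ∧ ∀ a : ℕ, Nat.Coprime a n → a ^ (n - 1) ≡ 1 [MOD n]

/-- The Euler liars for `n`, as residues in `{0, …, n-1}` coprime to `n` with
`(a/n) ≡ a ^ ((n-1)/2) (mod n)`. -/
noncomputable def eulerLiars (n : ℕ) : Finset ℕ :=
  (Finset.range n).filter
    (fun a => Nat.Coprime a n ∧ (jacobiSym (a : ℤ) n ≡ (a : ℤ) ^ ((n - 1) / 2) [ZMOD n]))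

lemma lambda_mem {n : ℕ} (hn : 1 < n) :
    0 < carmichaelLambda n ∧
      ∀ a : ℕ, Nat.Coprime a n → a ^ carmichaelLambda n ≡ 1 [MOD n] := by
  have hmem : n.totient ∈ {ℓ : ℕ | 0 < ℓ ∧ ∀ a : ℕ, Nat.Coprime a n → a ^ ℓ ≡ 1 [MOD n]} :=
    ⟨Nat.totient_pos.mpr (by omega), fun a ha => Nat.ModEq.pow_totient ha⟩
  exact Nat.sInf_mem ⟨_, hmem⟩

lemma lambda_dvd {n : ℕ} (hc : IsCarmichael n) : carmichaelLambda n ∣ n - 1 := by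
  obtain ⟨hpos, hpow⟩ := lambda_mem hc.1
  set L := carmichaelLambda n with hL
  rcases Nat.eq_zero_or_pos ((n - 1) % L) with h0 | hr
  · exact Nat.dvd_of_mod_eq_zero h0
  exfalso
  have hlt : (n - 1) % L < L := Nat.mod_lt _ hpos
  have hrmem : (n - 1) % L ∈
      {ℓ : ℕ | 0 < ℓ ∧ ∀ a : ℕ, Nat.Coprime a n → a ^ ℓ ≡ 1 [MOD n]} := by
    refine ⟨hr, fun a ha => ?_⟩
    have h1 : a ^ (n - 1) ≡ 1 [MOD n] := hc.2.2 a ha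
    have h2 : a ^ (L * ((n - 1) / L)) ≡ 1 [MOD n] := by
      rw [pow_mul]
      simpa using (hpow a ha).pow ((n - 1) / L)
    calc a ^ ((n - 1) % L) = 1 * a ^ ((n - 1) % L) := (one_mul _).symm
      _ ≡ a ^ (L * ((n - 1) / L)) * a ^ ((n - 1) % L) [MOD n] := (h2.symm.mul_right _)
      _ = a ^ (n - 1) := by rw [← pow_add, Nat.div_add_mod]
      _ ≡ 1 [MOD n] := h1
  have hle : carmichaelLambda n ≤ (n - 1) % L := Nat.sInf_le hrmem
  rw [← hL] at hle
  omega

lemma half_pow {n : ℕ} (hc : IsCarmichael n)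
    (hidx : Even ((n - 1) / carmichaelLambda n)) :
    ∀ a : ℕ, Nat.Coprime a n → a ^ ((n - 1) / 2) ≡ 1 [MOD n] := by
  obtain ⟨hpos, hpow⟩ := lambda_mem hc.1
  obtain ⟨k, hk⟩ := hidx
  have hdvd := lambda_dvd hc
  set L := carmichaelLambda n with hL
  have h1 : n - 1 = L * k + L * k := by
    rw [← mul_add, ← hk, Nat.mul_div_cancel' hdvd]
  have h2 : (n - 1) / 2 = L * k := by omega
  intro a ha
  rw [h2, pow_mul]
  simpa using (hpow a ha).pow k

lemma coprime_of_modEq {a b m : ℕ} (h : a ≡ b [MOD m]) (hb : Nat.Coprime b m) :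
    Nat.Coprime a m := by
  have hg : Nat.gcd m a = Nat.gcd m b := by
    rw [Nat.gcd_rec m a, Nat.gcd_rec m b, h]
  unfold Nat.Coprime at *
  rw [Nat.gcd_comm, hg, Nat.gcd_comm]
  exact hb

lemma pow_eq_one_of_isUnit {n e : ℕ} (hn : 1 < n)
    (h : ∀ a : ℕ, Nat.Coprime a n → a ^ e ≡ 1 [MOD n]) (z : ZMod n) (hz : IsUnit z) :
    z ^ e = 1 := by
  haveI : NeZero n := ⟨by omega⟩
  have hval : ((z.val : ℕ) : ZMod n) = z := ZMod.natCast_rightInverse z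
  have hcop : Nat.Coprime z.val n := ZMod.val_coe_unit_coprime hz.unit
  have hm := h z.val hcop
  have := (ZMod.natCast_eq_natCast_iff _ _ _).mpr hm
  push_cast at this
  rwa [hval] at this

lemma part1 {n : ℕ} (hc : IsCarmichael n)
    (hidx : Even ((n - 1) / carmichaelLambda n)) :
    ∀ a : ℤ, IsCoprime a (n : ℤ) → a ^ ((n - 1) / 2) ≡ 1 [ZMOD n] := by
  intro a ha
  have hu : IsUnit ((a : ZMod n)) := by
    obtain ⟨u, v, huv⟩ := ha
    have : ((u * a + v * n : ℤ) : ZMod n) = ((1 : ℤ) : ZMod n) := by rw [huv]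
    push_cast at this
    rw [ZMod.natCast_self, mul_zero, add_zero] at this
    exact IsUnit.of_mul_eq_one (u : ZMod n) (by rw [mul_comm]; exact this)
  have := pow_eq_one_of_isUnit hc.1 (half_pow hc hidx) _ hu
  have h2 : ((a ^ ((n - 1) / 2) : ℤ) : ZMod n) = ((1 : ℤ) : ZMod n) := by
    push_cast
    exact this
  exact (ZMod.intCast_eq_intCast_iff _ _ _).mp h2

lemma carmichael_four_le {n : ℕ} (hc : IsCarmichael n) : 4 ≤ n := by
  obtain ⟨h1, h2, -⟩ := hc
  by_contra h
  interval_cases n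
  · exact h2 Nat.prime_two
  · exact h2 Nat.prime_three

lemma carmichael_odd {n : ℕ} (hc : IsCarmichael n) : Odd n := by
  have h4 := carmichael_four_le hc
  rw [Nat.odd_iff]
  by_contra h
  have hne : n % 2 = 0 := by omega
  haveI : NeZero n := ⟨by omega⟩
  haveI : Fact (2 < n) := ⟨by omega⟩
  have hcop : Nat.Coprime (n - 1) n := by
    have h' : Nat.Coprime (n - 1 + 1) (n - 1) :=
      Nat.coprime_self_add_left.mpr (Nat.coprime_one_left _)
    have := h'.symm
    rwa [show n - 1 + 1 = n by omega] at this
  have hm := hc.2.2 (n - 1) hcop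
  have hz := (ZMod.natCast_eq_natCast_iff _ _ _).mpr hm
  push_cast [Nat.cast_sub (by omega : 1 ≤ n)] at hz
  rw [ZMod.natCast_self, zero_sub] at hz
  have hodd : Odd (n - 1) := by rw [Nat.odd_iff]; omega
  rw [hodd.neg_one_pow] at hz
  exact ZMod.neg_one_ne_one hz

lemma binom_mod (t m : ℕ) : (1 + t) ^ m ≡ 1 + m * t [MOD t ^ 2] := by
  induction m with
  | zero => simpa using Nat.ModEq.refl 1
  | succ m ih =>
    calc (1 + t) ^ (m + 1) = (1 + t) ^ m * (1 + t) := pow_succ _ _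
      _ ≡ (1 + m * t) * (1 + t) [MOD t ^ 2] := ih.mul_right _
      _ = (1 + (m + 1) * t) + m * t ^ 2 := by ring
      _ ≡ (1 + (m + 1) * t) + 0 [MOD t ^ 2] :=
          Nat.ModEq.add_left _ (Nat.modEq_zero_iff_dvd.mpr ⟨m, mul_comm m (t ^ 2)⟩)
      _ = 1 + (m + 1) * t := by ring

lemma carmichael_squarefree {n : ℕ} (hc : IsCarmichael n) : Squarefree n := by
  have hn0 : n ≠ 0 := by have := hc.1; omega
  rw [Nat.squarefree_iff_prime_squarefree]
  intro p hp hdvd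
  have hpn : p ∣ n := (dvd_mul_right p p).trans hdvd
  set k := n.factorization p with hk
  have hk2 : 2 ≤ k := by
    rw [hk, ← Nat.Prime.pow_dvd_iff_le_factorization hp hn0]
    simpa [pow_two] using hdvd
  set m := n / p ^ k with hm
  have hnm : n = p ^ k * m := (Nat.ordProj_mul_ordCompl_eq_self n p).symm
  have hpm : ¬ p ∣ m := Nat.not_dvd_ordCompl hp hn0
  set t := p ^ (k - 1) * m with ht
  have hnt : n = p * t := by
    rw [hnm, ht, ← mul_assoc, ← pow_succ']
    congr 2
    omega
  have hpt : p ∣ t := by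
    rw [ht]
    exact Dvd.dvd.mul_right (dvd_pow_self p (by omega)) m
  have ht0 : t ≠ 0 := by
    intro h; rw [h, mul_zero] at hnt; exact hn0 hnt
  -- coprimality of 1 + t with n
  have hcop : Nat.Coprime (1 + t) n := by
    by_contra h
    obtain ⟨q, hq, hq1, hq2⟩ := Nat.Prime.not_coprime_iff_dvd.mp h
    have hqt : q ∣ t := by
      rcases (Nat.Prime.dvd_mul hq).mp (hnt ▸ hq2) with h' | h'
      · rcases (Nat.prime_dvd_prime_iff_eq hq hp).mp h' with rfl
        exact hpt
      · exact h'
    have : q ∣ 1 := by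
      have := Nat.dvd_sub hq1 hqt
      simpa using this
    exact hq.one_lt.ne' (Nat.dvd_one.mp this)
  -- the congruence
  have hmain := hc.2.2 (1 + t) hcop
  have hbin := binom_mod t (n - 1)
  have hpk_t2 : p ^ k ∣ t ^ 2 := by
    rw [ht, mul_pow, ← pow_mul]
    exact Dvd.dvd.mul_right (pow_dvd_pow p (by omega)) _
  have hpk_n : p ^ k ∣ n := Nat.ordProj_dvd n p
  have h1 : (1 + t) ^ (n - 1) ≡ 1 + (n - 1) * t [MOD p ^ k] :=
    hbin.of_dvd hpk_t2
  have h2 : (1 + t) ^ (n - 1) ≡ 1 [MOD p ^ k] := hmain.of_dvd hpk_n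
  have h3 : 1 + (n - 1) * t ≡ 1 + 0 [MOD p ^ k] := by
    calc 1 + (n - 1) * t ≡ (1 + t) ^ (n - 1) [MOD p ^ k] := h1.symm
      _ ≡ 1 [MOD p ^ k] := h2
      _ = 1 + 0 := by ring
  have h4 : p ^ k ∣ (n - 1) * t := Nat.modEq_zero_iff_dvd.mp h3.add_left_cancel'
  have hcop2 : Nat.Coprime (p ^ k) (n - 1) := by
    apply Nat.Coprime.pow_left
    rw [Nat.Prime.coprime_iff_not_dvd hp]
    intro hdd
    have : p ∣ 1 := by
      have := Nat.dvd_sub hpn hdd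
      rwa [show n - (n - 1) = 1 by omega] at this
    exact hp.one_lt.ne' (Nat.dvd_one.mp this)
  have h5 : p ^ k ∣ t := hcop2.dvd_of_dvd_mul_left h4
  rw [ht] at h5
  have h6 : p ^ (k - 1) * p ∣ p ^ (k - 1) * m := by
    rw [← pow_succ]
    have : k - 1 + 1 = k := by omega
    rw [this]
    exact h5
  have h7 : p ∣ m := (mul_dvd_mul_iff_left (pow_ne_zero _ hp.pos.ne')).mp h6
  exact hpm h7

lemma exists_jacobi_neg_one {n : ℕ} (hc : IsCarmichael n) :
    ∃ b : ℕ, Nat.Coprime b n ∧ jacobiSym (b : ℤ) n = -1 := by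
  have hodd := carmichael_odd hc
  have h4 := carmichael_four_le hc
  have hsf := carmichael_squarefree hc
  have hn0 : n ≠ 0 := by omega
  set p := n.minFac with hp'
  have hp : p.Prime := Nat.minFac_prime (by omega)
  haveI : Fact p.Prime := ⟨hp⟩
  have hpn : p ∣ n := Nat.minFac_dvd n
  have hp2 : p ≠ 2 := by
    intro h
    rw [Nat.odd_iff] at hodd
    have h2n : (2 : ℕ) ∣ n := h ▸ hpn
    omega
  set m := n / p with hm'
  have hnm : n = p * m := by rw [hm', Nat.mul_div_cancel' hpn]
  have hpm : ¬ p ∣ m := by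
    intro h
    exact (Nat.squarefree_iff_prime_squarefree.mp hsf) p hp
      (by rw [hnm]; exact mul_dvd_mul_left p h)
  have hm0 : m ≠ 0 := by
    intro h; rw [h, mul_zero] at hnm; exact hn0 hnm
  have hcop_pm : Nat.Coprime p m := (Nat.Prime.coprime_iff_not_dvd hp).mpr hpm
  -- a nonsquare mod p
  obtain ⟨x, hx⟩ := FiniteField.exists_nonsquare (F := ZMod p)
    (by rw [ZMod.ringChar_zmod_n]; exact hp2)
  have hx0 : x ≠ 0 := fun h => hx (h ▸ ⟨0, (mul_zero 0).symm⟩)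
  set s := x.val with hs'
  have hs : ((s : ℕ) : ZMod p) = x := ZMod.natCast_rightInverse x
  have hsp : ¬ p ∣ s := by
    intro h
    have : ((s : ℕ) : ZMod p) = 0 := (ZMod.natCast_eq_zero_iff s p).mpr h
    exact hx0 (by rw [← hs, this])
  obtain ⟨b, hb1, hb2⟩ := Nat.chineseRemainder hcop_pm s 1
  refine ⟨b, ?_, ?_⟩
  · -- coprime
    have hbp : Nat.Coprime b p :=
      coprime_of_modEq hb1 ((Nat.Prime.coprime_iff_not_dvd hp).mpr hsp).symm
    have hbm : Nat.Coprime b m := coprime_of_modEq hb2 (Nat.coprime_one_left m)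
    rw [hnm]
    exact Nat.Coprime.mul_right hbp hbm
  · -- jacobi symbol
    rw [hnm, jacobiSym.mul_right' _ hp.pos.ne' hm0]
    have hJm : jacobiSym (b : ℤ) m = 1 := by
      have : jacobiSym (b : ℤ) m = jacobiSym ((1 : ℕ) : ℤ) m := by
        apply jacobiSym.mod_left'
        have : (b : ℤ) % m = ((b % m : ℕ) : ℤ) := by push_cast; ring
        rw [this, hb2]
        push_cast
        ring
      rw [this]
      exact jacobiSym.one_left m
    have hJp : jacobiSym (b : ℤ) p = -1 := by
      have h1 : jacobiSym (b : ℤ) p = jacobiSym ((s : ℕ) : ℤ) p := by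
        apply jacobiSym.mod_left'
        have e1 : (b : ℤ) % p = ((b % p : ℕ) : ℤ) := by push_cast; ring
        have e2 : ((s : ℕ) : ℤ) % p = ((s % p : ℕ) : ℤ) := by push_cast; ring
        rw [e1, e2, hb1]
      rw [h1, ← jacobiSym.legendreSym.to_jacobiSym]
      rw [legendreSym.eq_neg_one_iff']
      rw [hs]
      exact hx
    rw [hJp, hJm]
    ring

lemma jacobi_filter_card {n : ℕ} (hn : 1 < n) {b : ℕ} (hb : Nat.Coprime b n)
    (hjb : jacobiSym (b : ℤ) n = -1) :
    ((Finset.range n).filter (fun a => Nat.Coprime a n ∧ jacobiSym (a : ℤ) n = 1)).card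
      = n.totient / 2 := by
  classical
  obtain ⟨c, -, hbc⟩ := Nat.exists_mul_mod_eq_one_of_coprime hb hn
  -- basic facts
  have hn0 : 0 < n := by omega
  have hmod1 : (1 : ℕ) % n = 1 := Nat.mod_eq_of_lt hn
  have hbcmod : b * c ≡ 1 [MOD n] := by
    unfold Nat.ModEq; rw [hbc, hmod1]
  have hcopc : Nat.Coprime c n :=
    Nat.Coprime.coprime_dvd_left (dvd_mul_left c b)
      (coprime_of_modEq hbcmod (Nat.coprime_one_left n))
  have hJc : jacobiSym (c : ℤ) n = -1 := by
    have h1 : jacobiSym ((b * c : ℕ) : ℤ) n = jacobiSym ((1:ℕ) : ℤ) n := by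
      apply jacobiSym.mod_left'
      have e1 : ((b*c : ℕ) : ℤ) % n = (((b*c) % n : ℕ) : ℤ) := by push_cast; ring
      have e2 : ((1 : ℕ) : ℤ) % n = (((1:ℕ) % n : ℕ) : ℤ) := by push_cast; ring
      rw [e1, e2, hbcmod]
    push_cast at h1
    rw [jacobiSym.mul_left, hjb, jacobiSym.one_left] at h1
    linarith
  set S1 := (Finset.range n).filter (fun a => Nat.Coprime a n ∧ jacobiSym (a : ℤ) n = 1)
    with hS1
  set S2 := (Finset.range n).filter (fun a => Nat.Coprime a n ∧ jacobiSym (a : ℤ) n = -1)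
    with hS2
  -- jacobi of a product mod n
  have hJmul : ∀ (a d : ℕ), jacobiSym (((a * d) % n : ℕ) : ℤ) n
      = jacobiSym (a : ℤ) n * jacobiSym (d : ℤ) n := by
    intro a d
    have h1 : jacobiSym (((a * d) % n : ℕ) : ℤ) n = jacobiSym ((a*d : ℕ) : ℤ) n := by
      apply jacobiSym.mod_left'
      push_cast
      rw [Int.emod_emod_of_dvd _ dvd_rfl]
    rw [h1]
    push_cast
    rw [jacobiSym.mul_left]
  -- the two halves have the same size
  have hcard : S1.card = S2.card := by
    apply Finset.card_bij' (fun a _ => (a * b) % n) (fun a _ => (a * c) % n)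
    · intro a ha
      rw [hS1, Finset.mem_filter, Finset.mem_range] at ha
      obtain ⟨han, hac, haj⟩ := ha
      rw [hS2, Finset.mem_filter, Finset.mem_range]
      refine ⟨Nat.mod_lt _ hn0, ?_, ?_⟩
      · exact coprime_of_modEq (Nat.mod_modEq _ _) (Nat.Coprime.mul hac hb)
      · rw [hJmul, haj, hjb]; ring
    · intro a ha
      rw [hS2, Finset.mem_filter, Finset.mem_range] at ha
      obtain ⟨han, hac, haj⟩ := ha
      rw [hS1, Finset.mem_filter, Finset.mem_range]
      refine ⟨Nat.mod_lt _ hn0, ?_, ?_⟩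
      · exact coprime_of_modEq (Nat.mod_modEq _ _) (Nat.Coprime.mul hac hcopc)
      · rw [hJmul, haj, hJc]; ring
    · intro a ha
      rw [hS1, Finset.mem_filter, Finset.mem_range] at ha
      calc ((a * b) % n * c) % n = ((a * b) * c) % n := Nat.mod_mul_mod _ _ _
        _ = (a * (b * c)) % n := by ring_nf
        _ = (a % n) * ((b * c) % n) % n := (Nat.mul_mod _ _ _)
        _ = a := by rw [Nat.mod_eq_of_lt ha.1, hbc, mul_one, Nat.mod_eq_of_lt ha.1]
    · intro a ha
      rw [hS2, Finset.mem_filter, Finset.mem_range] at ha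
      calc ((a * c) % n * b) % n = ((a * c) * b) % n := Nat.mod_mul_mod _ _ _
        _ = (a * (b * c)) % n := by ring_nf
        _ = (a % n) * ((b * c) % n) % n := (Nat.mul_mod _ _ _)
        _ = a := by rw [Nat.mod_eq_of_lt ha.1, hbc, mul_one, Nat.mod_eq_of_lt ha.1]
  -- S1 and S2 partition the coprime residues
  have htot : S1.card + S2.card = n.totient := by
    have h0 : ((Finset.range n).filter (fun a => Nat.Coprime a n)).card = n.totient := by
      rw [Nat.totient]
      congr 1
      apply Finset.filter_congr
      intro a _
      exact ⟨fun h => h.symm, fun h => h.symm⟩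
    rw [← h0]
    have hsplit := Finset.card_filter_add_card_filter_not
      (s := (Finset.range n).filter (fun a => Nat.Coprime a n))
      (p := fun a => jacobiSym (a : ℤ) n = 1)
    rw [Finset.filter_filter, Finset.filter_filter] at hsplit
    rw [← hsplit]
    congr 1
    rw [hS2]
    congr 1
    apply Finset.filter_congr
    intro a ha
    constructor
    · rintro ⟨h1, h2⟩
      exact ⟨h1, by rw [h2]; norm_num⟩
    · rintro ⟨h1, h2⟩
      rcases jacobiSym.eq_one_or_neg_one
        (by rw [Int.gcd_natCast_natCast]; exact h1) with h | h
      · exact absurd h h2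
      · exact ⟨h1, h⟩
  omega

/-- For a Carmichael number of even index, every coprime `a` satisfies
`a ^ ((n-1)/2) ≡ 1 (mod n)`; the Euler liars are exactly the residues with Jacobi
symbol `1`, there are exactly `φ(n)/2` of them, and every Euler liar has Jacobi
symbol `1`. -/
theorem classA_eulerLiars (n : ℕ) (hc : IsCarmichael n)
    (hidx : Even ((n - 1) / carmichaelLambda n)) :
    (∀ a : ℤ, IsCoprime a (n : ℤ) → a ^ ((n - 1) / 2) ≡ 1 [ZMOD n]) ∧
    eulerLiars n =
      (Finset.range n).filter (fun a => Nat.Coprime a n ∧ jacobiSym (a : ℤ) n = 1) ∧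
    (eulerLiars n).card = n.totient / 2 ∧
    (∀ a ∈ eulerLiars n, jacobiSym (a : ℤ) n = 1) := by
  have p1 := part1 hc hidx
  have h4 := carmichael_four_le hc
  have h2 : eulerLiars n =
      (Finset.range n).filter (fun a => Nat.Coprime a n ∧ jacobiSym (a : ℤ) n = 1) := by
    unfold eulerLiars
    apply Finset.filter_congr
    intro a _
    constructor
    · rintro ⟨h1, hj⟩
      refine ⟨h1, ?_⟩
      have hpow := p1 a (Nat.isCoprime_iff_coprime.mpr h1)
      have hj1 : jacobiSym (a : ℤ) n ≡ 1 [ZMOD n] := hj.trans hpow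
      rcases jacobiSym.eq_one_or_neg_one
        (by rw [Int.gcd_natCast_natCast]; exact h1) with h | h
      · exact h
      · exfalso
        rw [h] at hj1
        have hdvd : (n : ℤ) ∣ 1 - (-1) := Int.ModEq.dvd hj1
        have hle : (n : ℤ) ≤ 2 := Int.le_of_dvd (by norm_num) (by simpa using hdvd)
        omega
    · rintro ⟨h1, hj⟩
      refine ⟨h1, ?_⟩
      have hpow := p1 a (Nat.isCoprime_iff_coprime.mpr h1)
      rw [hj]
      exact hpow.symm
  refine ⟨p1, h2, ?_, ?_⟩
  · rw [h2]
    obtain ⟨b, hb1, hb2⟩ := exists_jacobi_neg_one hc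
    exact jacobi_filter_card hc.1 hb1 hb2
  · intro a ha
    rw [h2, Finset.mem_filter] at ha
    exact ha.2.2
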